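/- Bound of R₃ by deviation from the averaged weights (Lemma in Appendix): let 𝒳 ⊆ ℝ^d be nonempty compact, let λ_1,…,λ_T : 𝒳 → ℝ² be continuous with ‖λ_t(x)‖_∞ ≤ B for all x ∈ 𝒳 and all t, let θ_1,…,θ_T ∈ Δ₂ be arbitrary, and set θ̄ = (1/T)·Σ_{t=1}^T θ_t ∈ Δ₂. Then min_{x∈𝒳} Σ_{t=1}^T ⟨θ_t, λ_t(x)⟩ − min_{x∈𝒳} max_{θ∈Δ₂} Σ_{t=1}^T ⟨θ, λ_t(x)⟩ ≤ B·Σ_{t=1}^T ‖θ_t − θ̄‖₁. -/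

import Mathlib

open Finset

/-- **Bound of `R₃` by deviation from the averaged weights.**
For continuous losses `λ t : 𝒳 → ℝ²` bounded by `B` and arbitrary simplex weights
`θ t ∈ Δ₂` with time average `θ̄ = (1/T)·Σ_t θ t`, one has
`min_x Σ_t ⟨θ t, λ t(x)⟩ − min_x max_{θ∈Δ₂} Σ_t ⟨θ, λ t(x)⟩ ≤ B·Σ_t ‖θ t − θ̄‖₁`. -/
theorem R3_deviation_from_average
    (d T : ℕ) (B : ℝ) (hB : 0 < B)
    (X : Set (EuclideanSpace ℝ (Fin d)))
    (hXne : X.Nonempty) (hXcomp : IsCompact X)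
    (lam : ℕ → EuclideanSpace ℝ (Fin d) → Fin 2 → ℝ)
    (hcont : ∀ t ∈ Finset.Icc 1 T, ∀ i, ContinuousOn (fun y => lam t y i) X)
    (hbdd : ∀ t ∈ Finset.Icc 1 T, ∀ y ∈ X, ∀ i, |lam t y i| ≤ B)
    (θ : ℕ → Fin 2 → ℝ)
    (hθ : ∀ t ∈ Finset.Icc 1 T, θ t ∈ stdSimplex ℝ (Fin 2))
    (θbar : Fin 2 → ℝ)
    (hθbar : ∀ i, θbar i = (1 / (T : ℝ)) * ∑ t ∈ Finset.Icc 1 T, θ t i) :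
    sInf ((fun y => ∑ t ∈ Finset.Icc 1 T, ∑ i, θ t i * lam t y i) '' X)
      - sInf ((fun y => sSup ((fun ϑ => ∑ t ∈ Finset.Icc 1 T, ∑ i, ϑ i * lam t y i)
          '' stdSimplex ℝ (Fin 2))) '' X)
      ≤ B * ∑ t ∈ Finset.Icc 1 T, ∑ i, |θ t i - θbar i| := by
  set S := Finset.Icc 1 T with hS
  set C := B * ∑ t ∈ S, ∑ i, |θ t i - θbar i| with hC
  set F : EuclideanSpace ℝ (Fin d) → ℝ := fun y => ∑ t ∈ S, ∑ i, θ t i * lam t y i with hF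
  set H : EuclideanSpace ℝ (Fin d) → (Fin 2 → ℝ) → ℝ :=
    fun y ϑ => ∑ t ∈ S, ∑ i, ϑ i * lam t y i with hH
  set G : EuclideanSpace ℝ (Fin d) → ℝ := fun y => sSup (H y '' stdSimplex ℝ (Fin 2)) with hG
  have hsimplex_ne : (stdSimplex ℝ (Fin 2)).Nonempty := ⟨Pi.single 0 1, single_mem_stdSimplex ℝ 0⟩
  -- F is bounded below on X
  have hFbdd : BddBelow (F '' X) := by
    refine ⟨-((S.card : ℝ) * (2 * B)), ?_⟩
    rintro _ ⟨y, hy, rfl⟩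
    have : ∀ t ∈ S, -(2 * B) ≤ ∑ i, θ t i * lam t y i := by
      intro t ht
      have h2 : ∀ i : Fin 2, -B ≤ θ t i * lam t y i := by
        intro i
        have h3 : |θ t i * lam t y i| ≤ B := by
          rw [abs_mul]
          calc |θ t i| * |lam t y i| ≤ 1 * B := by
                apply mul_le_mul _ (hbdd t ht y hy i) (abs_nonneg _) zero_le_one
                rw [abs_of_nonneg ((hθ t ht).1 i)]
                calc θ t i ≤ ∑ j, θ t j :=
                      Finset.single_le_sum (fun j _ => (hθ t ht).1 j) (Finset.mem_univ i)
                  _ = 1 := (hθ t ht).2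
            _ = B := one_mul B
        linarith [neg_abs_le (θ t i * lam t y i)]
      calc -(2 * B) = ∑ _i : Fin 2, (-B) := by simp
        _ ≤ ∑ i, θ t i * lam t y i := Finset.sum_le_sum fun i _ => h2 i
    calc -((S.card : ℝ) * (2 * B)) = ∑ _t ∈ S, -(2 * B) := by
          rw [Finset.sum_const]; push_cast; ring
      _ ≤ F y := Finset.sum_le_sum this
  -- key pointwise bound
  have key : ∀ y ∈ X, F y ≤ G y + C := by
    intro y hy
    rcases Nat.eq_zero_or_pos T with hT | hT
    · -- T = 0: everything is 0
      have hSe : S = ∅ := by simp [hS, hT]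
      have hF0 : F y = 0 := by simp [hF, hSe]
      have hC0 : C = 0 := by simp [hC, hSe]
      have hG0 : G y = 0 := by
        have : H y '' stdSimplex ℝ (Fin 2) = {0} := by
          apply Set.Subset.antisymm
          · rintro _ ⟨ϑ, hϑ, rfl⟩; simp [hH, hSe]
          · rintro x hx
            rcases hsimplex_ne with ⟨ϑ, hϑ⟩
            exact ⟨ϑ, hϑ, by simp [hH, hSe, Set.mem_singleton_iff.mp hx]⟩
        simp [hG, this]
      rw [hF0, hC0, hG0]; norm_num
    · -- T ≥ 1 : θbar ∈ simplex
      have hTne : (T : ℝ) ≠ 0 := by positivity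
      have hθbar_mem : θbar ∈ stdSimplex ℝ (Fin 2) := by
        constructor
        · intro i
          rw [hθbar i]
          apply mul_nonneg (by positivity)
          exact Finset.sum_nonneg fun t ht => (hθ t ht).1 i
        · have : ∑ i, θbar i = (1 / (T : ℝ)) * ∑ t ∈ S, ∑ i, θ t i := by
            simp only [hθbar]
            rw [← Finset.mul_sum, Finset.sum_comm]
          rw [this]
          have h1 : ∀ t ∈ S, ∑ i, θ t i = 1 := fun t ht => (hθ t ht).2
          rw [Finset.sum_congr rfl h1, Finset.sum_const, Nat.card_Icc]
          field_simp
          simp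
      -- H y '' simplex bounded above
      have hbddAbove : BddAbove (H y '' stdSimplex ℝ (Fin 2)) := by
        refine ⟨(S.card : ℝ) * B, ?_⟩
        rintro _ ⟨ϑ, hϑ, rfl⟩
        have : ∀ t ∈ S, ∑ i, ϑ i * lam t y i ≤ B := by
          intro t ht
          calc ∑ i, ϑ i * lam t y i ≤ ∑ i, ϑ i * B := by
                apply Finset.sum_le_sum
                intro i _
                exact mul_le_mul_of_nonneg_left
                  (le_trans (le_abs_self _) (hbdd t ht y hy i)) (hϑ.1 i)
            _ = (∑ i, ϑ i) * B := by rw [Finset.sum_mul]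
            _ = B := by rw [hϑ.2, one_mul]
        calc H y ϑ ≤ ∑ _t ∈ S, B := Finset.sum_le_sum this
          _ = (S.card : ℝ) * B := by rw [Finset.sum_const]; push_cast; ring
      have hle : H y θbar ≤ G y := le_csSup hbddAbove ⟨θbar, hθbar_mem, rfl⟩
      have hdiff : F y - H y θbar ≤ C := by
        have : F y - H y θbar = ∑ t ∈ S, ∑ i, (θ t i - θbar i) * lam t y i := by
          simp only [hF, hH, ← Finset.sum_sub_distrib, sub_mul]
        rw [this]
        calc ∑ t ∈ S, ∑ i, (θ t i - θbar i) * lam t y i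
            ≤ ∑ t ∈ S, ∑ i, |θ t i - θbar i| * B := by
              apply Finset.sum_le_sum; intro t ht
              apply Finset.sum_le_sum; intro i _
              calc (θ t i - θbar i) * lam t y i ≤ |(θ t i - θbar i) * lam t y i| :=
                    le_abs_self _
                _ = |θ t i - θbar i| * |lam t y i| := abs_mul _ _
                _ ≤ |θ t i - θbar i| * B :=
                    mul_le_mul_of_nonneg_left (hbdd t ht y hy i) (abs_nonneg _)
          _ = C := by
              rw [hC, Finset.mul_sum]
              apply Finset.sum_congr rfl
              intro t _
              rw [Finset.mul_sum]
              exact Finset.sum_congr rfl fun i _ => mul_comm _ _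
      linarith
  have h1 : sInf (F '' X) - C ≤ sInf (G '' X) := by
    apply le_csInf (hXne.image _)
    rintro _ ⟨y, hy, rfl⟩
    have h2 : sInf (F '' X) ≤ F y := csInf_le hFbdd ⟨y, hy, rfl⟩
    linarith [key y hy]
  linarith
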